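/- Let A be a real l×l matrix with spectral radius ρ(A) ≥ 1, W and P̄ symmetric positive semidefinite real l×l matrices, and f(X) = A X Aᵀ + W. Then for every ε > 0 there exists a constant c > 0 such that for all natural numbers τ, Tr(f^τ(P̄)) ≤ c · (ρ(A) + ε)^{2τ}. -/

import Mathlib

open Filter


open Matrix

/-- The spectral radius of a real square matrix: the largest absolute value of its
complex eigenvalues. -/
noncomputable def specRad {l : ℕ} (A : Matrix (Fin l) (Fin l) ℝ) : ℝ :=
  sSup ((fun z : ℂ => ‖z‖) '' spectrum ℂ (A.map (algebraMap ℝ ℂ)))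

section aux
attribute [local instance] Matrix.linftyOpNormedRing Matrix.linftyOpNormedAlgebra

lemma entry_nnnorm_le {l : ℕ} (M : Matrix (Fin l) (Fin l) ℂ) (i j : Fin l) :
    ‖M i j‖ ≤ ‖M‖ := by
  have : ‖M i j‖₊ ≤ ‖M‖₊ := by
    rw [Matrix.linfty_opNNNorm_def]
    exact (Finset.single_le_sum (f := fun j' => ‖M i j'‖₊) (fun _ _ => zero_le)
      (Finset.mem_univ j)).trans (Finset.le_sup (f := fun i' => ∑ j', ‖M i' j'‖₊)
      (Finset.mem_univ i))
  exact_mod_cast this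

/-- entrywise growth bound from Gelfand's formula -/
lemma exists_entry_pow_bound {l : ℕ} (A : Matrix (Fin l) (Fin l) ℝ) {s : ℝ}
    (h1 : 1 ≤ s) (hs : specRad A < s) :
    ∃ C : ℝ, 0 < C ∧ ∀ (k : ℕ) (i j : Fin l), |(A ^ k) i j| ≤ C * s ^ k := by
  set B : Matrix (Fin l) (Fin l) ℂ := A.map (algebraMap ℝ ℂ) with hB
  -- spectralRadius bounded by specRad A
  have hbdd : BddAbove ((fun z : ℂ => ‖z‖) '' spectrum ℂ B) :=
    ((spectrum.isCompact B).image continuous_norm).bddAbove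
  have hrad : spectralRadius ℂ B ≤ ENNReal.ofReal (specRad A) := by
    rw [spectralRadius]
    refine iSup₂_le fun z hz => ?_
    have hz' : ‖z‖ ≤ specRad A := le_csSup hbdd ⟨z, hz, rfl⟩
    rw [← enorm_eq_nnnorm, ← ofReal_norm]
    exact ENNReal.ofReal_le_ofReal hz'
  have hs0 : (0 : ℝ) < s := zero_lt_one.trans_le h1
  have hlt : spectralRadius ℂ B < ENNReal.ofReal s :=
    hrad.trans_lt ((ENNReal.ofReal_lt_ofReal_iff hs0).mpr hs)
  have hgel := spectrum.pow_nnnorm_pow_one_div_tendsto_nhds_spectralRadius B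
  have hev : ∀ᶠ n : ℕ in atTop, (‖B ^ n‖₊ : ENNReal) ^ (1 / n : ℝ) < ENNReal.ofReal s :=
    hgel.eventually_lt_const hlt
  obtain ⟨N, hN⟩ := eventually_atTop.mp hev
  have key : ∀ n : ℕ, N + 1 ≤ n → ‖B ^ n‖ ≤ s ^ n := by
    intro n hn
    have hn0 : n ≠ 0 := by omega
    have h := hN n (by omega)
    have h3 : (‖B ^ n‖₊ : ENNReal) < ENNReal.ofReal (s ^ n) := by
      have h' := ENNReal.rpow_lt_rpow h (by positivity : (0:ℝ) < (n:ℝ))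
      rwa [← ENNReal.rpow_mul, one_div, inv_mul_cancel₀ (by exact_mod_cast hn0 : (n:ℝ) ≠ 0),
        ENNReal.rpow_one, ENNReal.ofReal_rpow_of_pos hs0, Real.rpow_natCast] at h'
    have h4 := h3.le
    rw [← enorm_eq_nnnorm, ← ofReal_norm,
      ENNReal.ofReal_le_ofReal_iff (by positivity)] at h4
    exact h4
  set C : ℝ := 1 + ∑ n ∈ Finset.range (N + 1), ‖B ^ n‖ with hC
  have hCpos : 0 < C := by
    have : (0:ℝ) ≤ ∑ n ∈ Finset.range (N + 1), ‖B ^ n‖ :=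
      Finset.sum_nonneg fun _ _ => norm_nonneg _
    linarith
  refine ⟨C, hCpos, fun k i j => ?_⟩
  -- relate entries of A^k to B^k
  have hmap : B ^ k = (A ^ k).map (algebraMap ℝ ℂ) := by
    have : (algebraMap ℝ ℂ).mapMatrix (A ^ k) = ((algebraMap ℝ ℂ).mapMatrix A) ^ k :=
      map_pow _ _ _
    simpa [RingHom.mapMatrix_apply, hB] using this.symm
  have hentry : |(A ^ k) i j| = ‖(B ^ k) i j‖ := by
    rw [hmap]
    simp [Matrix.map_apply, Complex.norm_real, Real.norm_eq_abs]
  rw [hentry]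
  have hBk : ‖(B ^ k) i j‖ ≤ ‖B ^ k‖ := entry_nnnorm_le _ i j
  rcases le_or_gt k N with hk | hk
  · have h1' : ‖B ^ k‖ ≤ ∑ n ∈ Finset.range (N + 1), ‖B ^ n‖ :=
      Finset.single_le_sum (f := fun n => ‖B ^ n‖) (fun _ _ => norm_nonneg _)
        (Finset.mem_range.mpr (by omega))
    have hsk : (1:ℝ) ≤ s ^ k := one_le_pow₀ h1
    nlinarith [norm_nonneg (B ^ k)]
  · have hkey := key k (by omega)
    have hsk : (0:ℝ) ≤ s ^ k := by positivity
    have hC1 : (1:ℝ) ≤ C := by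
      have : (0:ℝ) ≤ ∑ n ∈ Finset.range (N + 1), ‖B ^ n‖ :=
        Finset.sum_nonneg fun _ _ => norm_nonneg _
      linarith
    calc ‖(B ^ k) i j‖ ≤ s ^ k := hBk.trans hkey
    _ ≤ C * s ^ k := le_mul_of_one_le_left hsk hC1
end aux

lemma psd_diag_nonneg {l : ℕ} {X : Matrix (Fin l) (Fin l) ℝ} (hX : X.PosSemidef)
    (i : Fin l) : 0 ≤ X i i := by
  have := hX.dotProduct_mulVec_nonneg (Pi.single i 1)
  simpa [dotProduct, mulVec, Pi.single_apply, Finset.mul_sum] using this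

lemma psd_trace_nonneg {l : ℕ} {X : Matrix (Fin l) (Fin l) ℝ} (hX : X.PosSemidef) :
    0 ≤ X.trace :=
  Finset.sum_nonneg fun i _ => psd_diag_nonneg hX i

lemma psd_entry_le_trace {l : ℕ} {X : Matrix (Fin l) (Fin l) ℝ} (hX : X.PosSemidef)
    (j k : Fin l) : |X j k| ≤ X.trace := by
  have hsymm : X k j = X j k := by
    have h := congrFun (congrFun hX.1 k) j
    simpa [Matrix.conjTranspose_apply] using h.symm
  have hq : ∀ c : ℝ, 0 ≤ X j j + 2 * c * X j k + c ^ 2 * X k k := by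
    intro c
    have := hX.dotProduct_mulVec_nonneg (Pi.single j 1 + Pi.single k c)
    rcases eq_or_ne j k with h | h
    · subst h
      have h2 := psd_diag_nonneg hX j
      nlinarith [sq_nonneg (1 + c)]
    · have hcomp : (Pi.single j 1 + Pi.single k c) ⬝ᵥ (X *ᵥ (Pi.single j 1 + Pi.single k c))
          = X j j + 2 * c * X j k + c ^ 2 * X k k := by
        simp [dotProduct, mulVec, Pi.single_apply, Finset.sum_add_distrib, mul_add, add_mul,
          Finset.sum_ite_eq', h, hsymm]
        ring
      rw [star_trivial, hcomp] at this
      exact this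
  have h1 := hq 1
  have h2 := hq (-1)
  have habs : 2 * |X j k| ≤ X j j + X k k := by
    rcases abs_cases (X j k) with ⟨h, _⟩ | ⟨h, _⟩ <;> nlinarith
  have hjj : X j j ≤ X.trace := by
    rcases eq_or_ne j k with h | h
    · subst h
      exact Finset.single_le_sum (f := fun i => X i i) (fun i _ => psd_diag_nonneg hX i)
        (Finset.mem_univ j)
    · calc X j j ≤ X j j + X k k - X k k := by ring_nf; exact le_refl _
      _ ≤ X.trace := by
          have : X j j + X k k ≤ X.trace := by
            have := Finset.sum_le_sum_of_subset_of_nonneg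
              (Finset.subset_univ {j, k}) (fun i _ _ => psd_diag_nonneg hX i)
            rwa [Finset.sum_pair h] at this
          have := psd_diag_nonneg hX k
          unfold Matrix.trace at *
          linarith
  have hkk : X k k ≤ X.trace := by
    rcases eq_or_ne j k with h | h
    · subst h; exact hjj
    · have : X j j + X k k ≤ X.trace := by
        have := Finset.sum_le_sum_of_subset_of_nonneg
          (Finset.subset_univ {j, k}) (fun i _ _ => psd_diag_nonneg hX i)
        rwa [Finset.sum_pair h] at this
      have := psd_diag_nonneg hX j
      linarith
  have h0 : 0 ≤ X.trace := psd_trace_nonneg hX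
  nlinarith [abs_nonneg (X j k)]

lemma trace_conj_le {l : ℕ} (M X : Matrix (Fin l) (Fin l) ℝ) (hX : X.PosSemidef)
    {b : ℝ} (hb0 : 0 ≤ b) (hb : ∀ i j, |M i j| ≤ b) :
    (M * X * Mᵀ).trace ≤ (l : ℝ) ^ 3 * b ^ 2 * X.trace := by
  have ht := psd_trace_nonneg hX
  calc (M * X * Mᵀ).trace
      = ∑ i, ∑ k, (∑ j, M i j * X j k) * M i k := by
        simp [Matrix.trace, Matrix.diag, Matrix.mul_apply, Matrix.transpose_apply]
    _ = ∑ i : Fin l, ∑ k : Fin l, ∑ j : Fin l, M i j * X j k * M i k := by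
        simp [Finset.sum_mul]
    _ ≤ ∑ _i : Fin l, ∑ _k : Fin l, ∑ _j : Fin l, b * X.trace * b := by
        refine Finset.sum_le_sum fun i _ => Finset.sum_le_sum fun k _ =>
          Finset.sum_le_sum fun j _ => ?_
        have h1 := hb i j
        have h2 := hb i k
        have h3 := psd_entry_le_trace hX j k
        have s1 : |M i j| * |X j k| ≤ b * X.trace :=
          mul_le_mul h1 h3 (abs_nonneg _) hb0
        have s2 : |M i j| * |X j k| * |M i k| ≤ b * X.trace * b :=
          mul_le_mul s1 h2 (abs_nonneg _) (mul_nonneg hb0 ht)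
        calc M i j * X j k * M i k ≤ |M i j * X j k * M i k| := le_abs_self _
          _ = |M i j| * |X j k| * |M i k| := by rw [abs_mul, abs_mul]
          _ ≤ b * X.trace * b := s2
    _ = (l : ℝ) ^ 3 * b ^ 2 * X.trace := by
        simp [Finset.sum_const, Finset.card_univ]
        ring

lemma iterate_formula {l : ℕ} (A W P : Matrix (Fin l) (Fin l) ℝ) (τ : ℕ) :
    (fun Z : Matrix (Fin l) (Fin l) ℝ => A * Z * Aᵀ + W)^[τ] P
      = A ^ τ * P * (A ^ τ)ᵀ + ∑ k ∈ Finset.range τ, A ^ k * W * (A ^ k)ᵀ := by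
  induction τ with
  | zero => simp
  | succ n ih =>
    rw [Function.iterate_succ_apply', ih, Finset.sum_range_succ']
    simp only [add_mul, mul_add, Finset.mul_sum, Finset.sum_mul, pow_succ',
      Matrix.transpose_mul, pow_zero, Matrix.transpose_one, one_mul, mul_one]
    rw [add_assoc]
    congr 1
    · simp [mul_assoc]
    · congr 1
      refine Finset.sum_congr rfl fun k _ => ?_
      simp [mul_assoc]


/-- Exponential upper bound on the estimation cost in terms of the age of
information: for every `ε > 0` there is `c > 0` with
`Tr(f^τ(P̄)) ≤ c (ρ(A) + ε)^{2τ}` for all `τ`. -/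
theorem cost_exponential_upper_bound {l : ℕ}
    (A W Pbar : Matrix (Fin l) (Fin l) ℝ)
    (hW : W.PosSemidef) (hP : Pbar.PosSemidef) (hρ : 1 ≤ specRad A) :
    ∀ ε : ℝ, 0 < ε → ∃ c : ℝ, 0 < c ∧ ∀ τ : ℕ,
      ((fun Z : Matrix (Fin l) (Fin l) ℝ => A * Z * Aᵀ + W)^[τ] Pbar).trace ≤
        c * (specRad A + ε) ^ (2 * τ) := by
  intro ε hε
  set s : ℝ := specRad A + ε with hsdef
  have h1 : 1 ≤ s := by simp only [hsdef]; linarith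
  have hs : specRad A < s := by simp only [hsdef]; linarith
  obtain ⟨C, hC, hCb⟩ := exists_entry_pow_bound A h1 hs
  set q : ℝ := s ^ 2 with hqdef
  have hq1 : 1 < q := by nlinarith
  have hq0 : 0 < q := by linarith
  set K : ℝ := (l : ℝ) ^ 3 * C ^ 2 with hKdef
  have hK0 : 0 ≤ K := by positivity
  have htP := psd_trace_nonneg hP
  have htW := psd_trace_nonneg hW
  have hdiv : 0 ≤ W.trace / (q - 1) := div_nonneg htW (by linarith)
  refine ⟨K * (Pbar.trace + W.trace / (q - 1)) + 1, by nlinarith, fun τ => ?_⟩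
  have hpowq : ∀ k : ℕ, (s ^ k) ^ 2 = q ^ k := fun k => by
    rw [hqdef, ← pow_mul, ← pow_mul, Nat.mul_comm]
  have hterm : ∀ (k : ℕ) (X : Matrix (Fin l) (Fin l) ℝ), X.PosSemidef →
      (A ^ k * X * (A ^ k)ᵀ).trace ≤ K * q ^ k * X.trace := by
    intro k X hX
    have := trace_conj_le (A ^ k) X hX (b := C * s ^ k)
      (by positivity) (fun i j => hCb k i j)
    calc (A ^ k * X * (A ^ k)ᵀ).trace ≤ (l : ℝ) ^ 3 * (C * s ^ k) ^ 2 * X.trace := this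
      _ = K * q ^ k * X.trace := by rw [mul_pow, ← hpowq k, hKdef]; ring
  have hgoalpow : (specRad A + ε) ^ (2 * τ) = q ^ τ := by
    rw [← hsdef, hqdef, pow_mul]
  rw [hgoalpow, iterate_formula, Matrix.trace_add, Matrix.trace_sum]
  have hsum : ∑ k ∈ Finset.range τ, q ^ k ≤ q ^ τ / (q - 1) := by
    rw [geom_sum_eq hq1.ne' τ]
    exact (div_le_div_iff_of_pos_right (by linarith)).mpr (by linarith)
  have hqτ : (0:ℝ) < q ^ τ := pow_pos hq0 τ
  calc (A ^ τ * Pbar * (A ^ τ)ᵀ).trace + ∑ k ∈ Finset.range τ, (A ^ k * W * (A ^ k)ᵀ).trace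
      ≤ K * q ^ τ * Pbar.trace + ∑ k ∈ Finset.range τ, K * q ^ k * W.trace := by
        exact add_le_add (hterm τ Pbar hP) (Finset.sum_le_sum fun k _ => hterm k W hW)
    _ = K * Pbar.trace * q ^ τ + (K * W.trace) * ∑ k ∈ Finset.range τ, q ^ k := by
        rw [Finset.mul_sum]
        congr 1
        · ring
        · exact Finset.sum_congr rfl fun k _ => by ring
    _ ≤ K * Pbar.trace * q ^ τ + (K * W.trace) * (q ^ τ / (q - 1)) := by
        gcongr
    _ ≤ (K * (Pbar.trace + W.trace / (q - 1)) + 1) * q ^ τ := by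
        have : (K * W.trace) * (q ^ τ / (q - 1)) = (K * (W.trace / (q - 1))) * q ^ τ := by
          ring
        rw [this]; nlinarith
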